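/- Let P be a positive (possibly disjunctive) Datalog program without occurrences of the built-in inequality predicate ≠, and let F be a set of ground facts. If P ∪ F has a model, then P ∪ F' has a model, where F' is obtained from F by injectively renaming its constants to fresh constants that do not occur in P ∪ F. -/

import Mathlib

set_option autoImplicit false
set_option linter.unusedVariables false

/-! # ALCHOI with closed predicates: syntax -/

/-- Basic roles: role names `p` or their inverses `p⁻`. -/
inductive DLRole : Type
  | name : ℕ → DLRole
  | inv : ℕ → DLRole
  deriving DecidableEq

/-- The inverse `r⁻` of a basic role. -/
def DLRole.invert : DLRole → DLRole
  | .name p => .inv p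
  | .inv p => .name p

/-- The underlying role name of a basic role. -/
def DLRole.nameOf : DLRole → ℕ
  | .name p => p
  | .inv p => p

/-- ALCHOI concepts. -/
inductive DLConcept : Type
  | atom : ℕ → DLConcept            -- concept name
  | top : DLConcept
  | bot : DLConcept
  | nom : ℕ → DLConcept             -- nominal {a}
  | neg : DLConcept → DLConcept
  | conj : DLConcept → DLConcept → DLConcept
  | disj : DLConcept → DLConcept → DLConcept
  | ex : DLRole → DLConcept → DLConcept
  | all : DLRole → DLConcept → DLConcept
  deriving DecidableEq

/-- TBox inclusions: concept inclusions and role inclusions. -/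
inductive Inclusion : Type
  | concl : DLConcept → DLConcept → Inclusion
  | rolel : DLRole → DLRole → Inclusion
  deriving DecidableEq

/-- ABox assertions `A(a)`, `p(a,b)` (over concept and role *names*). -/
inductive Assertion : Type
  | ca : ℕ → ℕ → Assertion
  | ra : ℕ → ℕ → ℕ → Assertion
  deriving DecidableEq

abbrev TBox := List Inclusion
abbrev ABox := List Assertion

/-- A closed predicate is a concept name or a role name. -/
inductive ClosedPred : Type
  | cp : ℕ → ClosedPred
  | rp : ℕ → ClosedPred
  deriving DecidableEq

/-- A knowledge base with closed predicates. -/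
structure KB where
  tbox : TBox
  sig : Set ClosedPred
  abox : ABox

/-- Domain elements: named individuals (standard name assumption), fringe
individuals `c^α`, and anonymous elements. -/
inductive Elem : Type
  | ind : ℕ → Elem
  | fringe : ℕ → Inclusion → Elem
  | anon : ℕ → Elem
  deriving DecidableEq

def Elem.isFringe : Elem → Prop
  | .fringe _ _ => True
  | _ => False

/-! # Semantics -/

/-- An interpretation. -/
structure Interp where
  dom : Set Elem
  dom_nonempty : dom.Nonempty
  intC : ℕ → Set Elem
  intR : ℕ → Set (Elem × Elem)
  intI : ℕ → Elem
  intC_sub : ∀ A, intC A ⊆ dom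
  intR_sub : ∀ p, ∀ x ∈ intR p, x.1 ∈ dom ∧ x.2 ∈ dom
  intI_mem : ∀ a, intI a ∈ dom

/-- Extension of a basic role. -/
def Interp.roleExt (I : Interp) : DLRole → Set (Elem × Elem)
  | .name p => I.intR p
  | .inv p => {x | (x.2, x.1) ∈ I.intR p}

/-- Extension of a concept. -/
def Interp.cExt (I : Interp) : DLConcept → Set Elem
  | .atom A => I.intC A
  | .top => I.dom
  | .bot => ∅
  | .nom a => {I.intI a}
  | .neg C => I.dom \ I.cExt C
  | .conj C D => I.cExt C ∩ I.cExt D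
  | .disj C D => I.cExt C ∪ I.cExt D
  | .ex r C => {e | ∃ f, (e, f) ∈ I.roleExt r ∧ f ∈ I.cExt C}
  | .all r C => {e | e ∈ I.dom ∧ ∀ f, (e, f) ∈ I.roleExt r → f ∈ I.cExt C}

def Interp.satIncl (I : Interp) : Inclusion → Prop
  | .concl C D => I.cExt C ⊆ I.cExt D
  | .rolel r s => I.roleExt r ⊆ I.roleExt s

def Interp.satAssert (I : Interp) : Assertion → Prop
  | .ca A a => I.intI a ∈ I.intC A
  | .ra p a b => (I.intI a, I.intI b) ∈ I.intR p

def Interp.satTBox (I : Interp) (T : TBox) : Prop := ∀ α ∈ T, I.satIncl α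

def Interp.satABox (I : Interp) (Ab : ABox) : Prop := ∀ β ∈ Ab, I.satAssert β

/-- `I ⊨_Σ A`: `I` satisfies the ABox, and every membership in a closed
predicate is explicitly asserted. -/
def Interp.satABoxClosed (I : Interp) (sig : Set ClosedPred) (Ab : ABox) : Prop :=
  I.satABox Ab ∧
  (∀ A : ℕ, ClosedPred.cp A ∈ sig → ∀ e ∈ I.intC A,
      ∃ a : ℕ, e = Elem.ind a ∧ Assertion.ca A a ∈ Ab) ∧
  (∀ p : ℕ, ClosedPred.rp p ∈ sig → ∀ x ∈ I.intR p,
      ∃ a b : ℕ, x = (Elem.ind a, Elem.ind b) ∧ Assertion.ra p a b ∈ Ab)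

/-! ## Symbols occurring in a KB -/

def DLConcept.noms : DLConcept → Set ℕ
  | .nom a => {a}
  | .neg C => C.noms
  | .conj C D => C.noms ∪ D.noms
  | .disj C D => C.noms ∪ D.noms
  | .ex _ C => C.noms
  | .all _ C => C.noms
  | _ => ∅

def Inclusion.noms : Inclusion → Set ℕ
  | .concl C D => C.noms ∪ D.noms
  | .rolel _ _ => ∅

def Assertion.inds : Assertion → Set ℕ
  | .ca _ a => {a}
  | .ra _ a b => {a, b}

/-- The individuals occurring in a KB (nominals of the TBox and individuals
of the ABox). -/
def KB.inds (K : KB) : Set ℕ :=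
  (⋃ α ∈ K.tbox, Inclusion.noms α) ∪ ⋃ β ∈ K.abox, Assertion.inds β

def DLConcept.cnames : DLConcept → Set ℕ
  | .atom A => {A}
  | .neg C => C.cnames
  | .conj C D => C.cnames ∪ D.cnames
  | .disj C D => C.cnames ∪ D.cnames
  | .ex _ C => C.cnames
  | .all _ C => C.cnames
  | _ => ∅

def DLConcept.rnames : DLConcept → Set ℕ
  | .neg C => C.rnames
  | .conj C D => C.rnames ∪ D.rnames
  | .disj C D => C.rnames ∪ D.rnames
  | .ex r C => {r.nameOf} ∪ C.rnames
  | .all r C => {r.nameOf} ∪ C.rnames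
  | _ => ∅

def Inclusion.cnames : Inclusion → Set ℕ
  | .concl C D => C.cnames ∪ D.cnames
  | .rolel _ _ => ∅

def Inclusion.rnames : Inclusion → Set ℕ
  | .concl C D => C.rnames ∪ D.rnames
  | .rolel r s => {r.nameOf, s.nameOf}

def TBox.cnames (T : TBox) : Set ℕ := ⋃ α ∈ T, Inclusion.cnames α
def TBox.rnames (T : TBox) : Set ℕ := ⋃ α ∈ T, Inclusion.rnames α

def Assertion.cnames : Assertion → Set ℕ
  | .ca A _ => {A}
  | .ra _ _ _ => ∅

def Assertion.rnames : Assertion → Set ℕ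
  | .ca _ _ => ∅
  | .ra p _ _ => {p}

def KB.cnames (K : KB) : Set ℕ := TBox.cnames K.tbox ∪ ⋃ β ∈ K.abox, Assertion.cnames β
def KB.rnames (K : KB) : Set ℕ := TBox.rnames K.tbox ∪ ⋃ β ∈ K.abox, Assertion.rnames β

/-- An ABox over the given sets of concept names and role names. -/
def ABoxOver (Ab : ABox) (cns rns : Set ℕ) : Prop :=
  ∀ β ∈ Ab, match β with
    | Assertion.ca A _ => A ∈ cns
    | Assertion.ra p _ _ => p ∈ rns

/-- `I ⊨ K` for a KB with closed predicates: the standard name assumption for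
the individuals occurring in `K`, satisfaction of the TBox, and `I ⊨_Σ A`. -/
def isModel (I : Interp) (K : KB) : Prop :=
  (∀ a ∈ K.inds, I.intI a = Elem.ind a ∧ Elem.ind a ∈ I.dom) ∧
  I.satTBox K.tbox ∧
  I.satABoxClosed K.sig K.abox

/-! # Normal form -/

inductive IsBasicConcept : DLConcept → Prop
  | atom (A : ℕ) : IsBasicConcept (.atom A)
  | top : IsBasicConcept .top
  | bot : IsBasicConcept .bot
  | nom (a : ℕ) : IsBasicConcept (.nom a)

inductive IsConjOfBasic : DLConcept → Prop
  | basic {C : DLConcept} : IsBasicConcept C → IsConjOfBasic C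
  | conj {C D : DLConcept} : IsConjOfBasic C → IsConjOfBasic D → IsConjOfBasic (.conj C D)

inductive IsDisjOfBasic : DLConcept → Prop
  | basic {C : DLConcept} : IsBasicConcept C → IsDisjOfBasic C
  | disj {C D : DLConcept} : IsDisjOfBasic C → IsDisjOfBasic D → IsDisjOfBasic (.disj C D)

/-- Inclusions of shape (N1). -/
def IsN1 : Inclusion → Prop
  | .concl C D => IsConjOfBasic C ∧ IsDisjOfBasic D
  | .rolel _ _ => False

/-- The existential inclusion `A ⊑ ∃r.A'` (shape (N2)). -/
def exIncl (A : ℕ) (r : DLRole) (A' : ℕ) : Inclusion :=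
  .concl (.atom A) (.ex r (.atom A'))

def Inclusion.isExistential (α : Inclusion) : Prop := ∃ A r A', α = exIncl A r A'

/-- Inclusions in normal form (N1)--(N4). -/
inductive NormalIncl : Inclusion → Prop
  | n1 {C D : DLConcept} : IsConjOfBasic C → IsDisjOfBasic D → NormalIncl (.concl C D)
  | n2 (A : ℕ) (r : DLRole) (A' : ℕ) : NormalIncl (exIncl A r A')
  | n3 (A : ℕ) (r : DLRole) (A' : ℕ) : NormalIncl (.concl (.atom A) (.all r (.atom A')))
  | n4 (r s : DLRole) : NormalIncl (.rolel r s)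

/-- A TBox in normal form. -/
def NormalTBox (T : TBox) : Prop := ∀ α ∈ T, NormalIncl α

/-! # Role hierarchy and closed roles -/

/-- `r ⊑*_T s`. -/
inductive subRole (T : TBox) : DLRole → DLRole → Prop
  | refl (r : DLRole) : subRole T r r
  | inv {r s : DLRole} : subRole T r s → subRole T r.invert s.invert
  | step {r r₁ s : DLRole} : subRole T r r₁ → Inclusion.rolel r₁ s ∈ T → subRole T r s

/-- `r ∈_T Σ`: `r ⊑*_T s` for some `s` with `s` or `s⁻` in `Σ`. -/
def roleClosed (T : TBox) (sig : Set ClosedPred) (r : DLRole) : Prop :=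
  ∃ s : DLRole, subRole T r s ∧ ClosedPred.rp s.nameOf ∈ sig
/-! # Conjunctive queries -/

/-- Query atoms `A(x)`, `r(x,y)` over variables. -/
inductive QAtom : Type
  | ca : ℕ → ℕ → QAtom
  | ra : ℕ → ℕ → ℕ → QAtom
  deriving DecidableEq

def QAtom.vars : QAtom → Set ℕ
  | .ca _ x => {x}
  | .ra _ x y => {x, y}

/-- Variables of a set of atoms. -/
def qvarsS (s : Set QAtom) : Set ℕ := ⋃ a ∈ s, QAtom.vars a

/-- A conjunctive query with answer variables `ansVars`; all remaining
variables are existentially quantified. -/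
structure CQuery where
  atoms : List QAtom
  ansVars : List ℕ
  ansVars_mem : ∀ x ∈ ansVars, x ∈ qvarsS {a | a ∈ atoms}

def CQuery.atomSet (q : CQuery) : Set QAtom := {a | a ∈ q.atoms}
def CQuery.varSet (q : CQuery) : Set ℕ := qvarsS q.atomSet

def QAtom.satBy : QAtom → Interp → (ℕ → Elem) → Prop
  | .ca A x, I, π => π x ∈ I.intC A
  | .ra p x y, I, π => (π x, π y) ∈ I.intR p

/-- `I ⊨ q(t)` for a tuple `t` of domain elements: some map `π` of the
variables into the domain sends the answer tuple to `t` and satisfies all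
atoms. -/
def Interp.satCQ (I : Interp) (q : CQuery) (t : List Elem) : Prop :=
  ∃ π : ℕ → Elem, (∀ v ∈ q.varSet, π v ∈ I.dom) ∧
    q.ansVars.map π = t ∧ ∀ a ∈ q.atoms, a.satBy I π

/-- `K ⊨ q(t)` for a tuple `t` of individuals. -/
def KB.entailsCQ (K : KB) (q : CQuery) (t : List ℕ) : Prop :=
  ∀ I : Interp, isModel I K → I.satCQ q (t.map Elem.ind)

/-- An ontology-mediated query. -/
structure OMQ where
  tbox : TBox
  sig : Set ClosedPred
  q : CQuery

def OMQ.kb (Q : OMQ) (Ab : ABox) : KB := ⟨Q.tbox, Q.sig, Ab⟩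

/-- `t ∈ cert(Q, A)`: `t` is a tuple (of the query's arity) of individuals
occurring in the KB that is entailed. -/
def certOMQ (Q : OMQ) (Ab : ABox) (t : List ℕ) : Prop :=
  t.length = Q.q.ansVars.length ∧ (∀ a ∈ t, a ∈ (Q.kb Ab).inds) ∧
  (Q.kb Ab).entailsCQ Q.q t

/-- c-variables of an OMQ. -/
def isCVar (Q : OMQ) (x : ℕ) : Prop :=
  x ∈ Q.q.ansVars ∨
  (∃ p y, (QAtom.ra p x y ∈ Q.q.atoms ∨ QAtom.ra p y x ∈ Q.q.atoms) ∧
      roleClosed Q.tbox Q.sig (.name p)) ∨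
  (∃ A, QAtom.ca A x ∈ Q.q.atoms ∧ ClosedPred.cp A ∈ Q.sig)

/-- A c-safe OMQ: all variables of the query are c-variables. -/
def cSafe (Q : OMQ) : Prop := ∀ x ∈ Q.q.varSet, isCVar Q x

/-! ## Query graph, acyclicity -/

/-- The query (Gaifman) graph of a set of atoms. -/
def queryGraphS (s : Set QAtom) : SimpleGraph ℕ where
  Adj x y := x ≠ y ∧ ∃ a ∈ s, x ∈ a.vars ∧ y ∈ a.vars
  symm := ⟨fun x y h => ⟨h.1.symm, h.2.imp fun a h' => ⟨h'.1, h'.2.2, h'.2.1⟩⟩⟩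
  loopless := ⟨fun x h => h.1 rfl⟩

def CQConnectedS (s : Set QAtom) : Prop :=
  ∀ x ∈ qvarsS s, ∀ y ∈ qvarsS s, (queryGraphS s).Reachable x y

/-- Acyclic CQ: the query graph is acyclic, and every edge carries exactly
one role atom. -/
def CQAcyclicS (s : Set QAtom) : Prop :=
  (queryGraphS s).IsAcyclic ∧
  ∀ x y, (queryGraphS s).Adj x y →
    ∃! a : QAtom, a ∈ s ∧ ∃ p, a = QAtom.ra p x y ∨ a = QAtom.ra p y x

/-- `q⁻`: the atoms of `Q` minus the role atoms connecting two c-variables. -/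
def qminus (Q : OMQ) : Set QAtom :=
  {a | a ∈ Q.q.atoms ∧ ¬ ∃ p x y, a = QAtom.ra p x y ∧ isCVar Q x ∧ isCVar Q y}

/-- c-acyclicity: `q⁻` is acyclic and every connected component of `G(q⁻)`
contains exactly one c-variable. -/
def cAcyclic (Q : OMQ) : Prop :=
  CQAcyclicS (qminus Q) ∧
  ∀ x ∈ qvarsS (qminus Q),
    ∃! y, y ∈ qvarsS (qminus Q) ∧ (queryGraphS (qminus Q)).Reachable x y ∧ isCVar Q y

/-- Instance query: a single atom, all of whose variables are answer variables. -/
def isInstanceQuery (q : CQuery) : Prop :=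
  (∃ a : QAtom, q.atoms = [a]) ∧ ∀ v ∈ q.varSet, v ∈ q.ansVars

/-! ## Rooted tree presentations of acyclic CQs and query concepts -/

/-- Rooted trees presenting connected acyclic CQs: a node carries its
variable, the concept names labelling it, and its children together with the
(possibly inverse) role connecting to them. -/
inductive QTree : Type
  | node : ℕ → List ℕ → List (DLRole × QTree) → QTree

def QTree.root : QTree → ℕ
  | .node x _ _ => x

def conjOfList : List DLConcept → DLConcept
  | [] => .top
  | C :: rest => .conj C (conjOfList rest)

mutual
  /-- The query concept `C_{q,x}` determined by a rooted tree presentation. -/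
  def QTree.concept : QTree → DLConcept
    | .node _ cs children =>
        .conj (conjOfList (cs.map DLConcept.atom)) (QTree.childConcept children)
  def QTree.childConcept : List (DLRole × QTree) → DLConcept
    | [] => .top
    | (r, t) :: rest => .conj (.ex r (QTree.concept t)) (QTree.childConcept rest)
end

/-- The role atom represented by a tree edge from `x` to `y` labelled `r`. -/
def edgeAtom (x : ℕ) (r : DLRole) (y : ℕ) : QAtom :=
  match r with
  | .name p => .ra p x y
  | .inv p => .ra p y x

mutual
  /-- The set of atoms represented by a tree. -/
  def QTree.atomSet : QTree → Set QAtom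
    | .node x cs children =>
        {a | ∃ A ∈ cs, a = QAtom.ca A x} ∪ QTree.childAtomSet x children
  def QTree.childAtomSet : ℕ → List (DLRole × QTree) → Set QAtom
    | _, [] => ∅
    | x, (r, t) :: rest =>
        insert (edgeAtom x r t.root) (QTree.atomSet t) ∪ QTree.childAtomSet x rest
end

mutual
  def QTree.varList : QTree → List ℕ
    | .node x _ children => x :: QTree.childVarList children
  def QTree.childVarList : List (DLRole × QTree) → List ℕ
    | [] => []
    | (_, t) :: rest => QTree.varList t ++ QTree.childVarList rest
end

/-- `t` is the rooted tree presentation of the CQ `q` (viewed as a set of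
atoms) with root variable `x`. -/
def QTree.presents (t : QTree) (q : Set QAtom) (x : ℕ) : Prop :=
  t.root = x ∧ t.atomSet = q ∧ t.varList.Nodup
/-! ## Concept and role names occurring in an OMQ -/

def QAtom.cnames : QAtom → Set ℕ
  | .ca A _ => {A}
  | .ra _ _ _ => ∅

def QAtom.rnames : QAtom → Set ℕ
  | .ca _ _ => ∅
  | .ra p _ _ => {p}

def OMQ.cnames (Q : OMQ) : Set ℕ := TBox.cnames Q.tbox ∪ ⋃ a ∈ Q.q.atoms, QAtom.cnames a
def OMQ.rnames (Q : OMQ) : Set ℕ := TBox.rnames Q.tbox ∪ ⋃ a ∈ Q.q.atoms, QAtom.rnames a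
/-! # Cores and extensions -/

/-- The possible domain of a core for `K`: the individuals of `K` plus the
fringe individuals `c^α` for existential inclusions `α` of the TBox. -/
def coreDom (K : KB) : Set Elem :=
  {e | ∃ a ∈ K.inds, e = Elem.ind a} ∪
  {e | ∃ a ∈ K.inds, ∃ α ∈ K.tbox, Inclusion.isExistential α ∧ e = Elem.fringe a α}

/-- A core for a KB with closed predicates (conditions (c1)--(c5)). -/
structure IsCore (Ic : Interp) (K : KB) : Prop where
  dom_sub : Ic.dom ⊆ coreDom K
  inds_sub : ∀ a ∈ K.inds, Elem.ind a ∈ Ic.dom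
  sna : ∀ a ∈ K.inds, Ic.intI a = Elem.ind a
  c2 : Ic.satABoxClosed K.sig K.abox
  c3 : ∀ α ∈ K.tbox,
        (¬ α.isExistential → Ic.satIncl α) ∧
        (∀ A r A', α = exIncl A r A' → roleClosed K.tbox K.sig r → Ic.satIncl α)
  c4 : ∀ p : ℕ, ∀ x ∈ Ic.intR p,
        (∃ a b, a ∈ K.inds ∧ b ∈ K.inds ∧ x = (Elem.ind a, Elem.ind b)) ∨
        (∃ a α, a ∈ K.inds ∧ x = (Elem.ind a, Elem.fringe a α)) ∨
        (∃ a α, a ∈ K.inds ∧ x = (Elem.fringe a α, Elem.ind a))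
  c5 : ∀ e ∈ Ic.dom, ¬ e.isFringe →
        ∀ A r A', exIncl A r A' ∈ K.tbox → e ∈ Ic.intC A →
          e ∈ Ic.cExt (.ex r (.atom A'))

/-- `J` is an extension of the core `Ic` (with respect to the closed
predicates `sig`). -/
structure IsExtension (J Ic : Interp) (sig : Set ClosedPred) : Prop where
  dom_sub : Ic.dom ⊆ J.dom
  cAgree : ∀ A : ℕ, Ic.intC A = J.intC A ∩ Ic.dom
  rAgree : ∀ p : ℕ, Ic.intR p = J.intR p ∩ (Ic.dom ×ˢ Ic.dom)
  closedC : ∀ A : ℕ, ClosedPred.cp A ∈ sig → J.intC A = Ic.intC A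
  closedR : ∀ p : ℕ, ClosedPred.rp p ∈ sig → J.intR p = Ic.intR p

/-! # Types and the model building game -/

/-- The basic concepts occurring in a concept. -/
def DLConcept.basics : DLConcept → Set DLConcept
  | .atom A => {.atom A}
  | .nom a => {.nom a}
  | .top => {.top}
  | .bot => {.bot}
  | .neg C => C.basics
  | .conj C D => C.basics ∪ D.basics
  | .disj C D => C.basics ∪ D.basics
  | .ex _ C => C.basics
  | .all _ C => C.basics

def Inclusion.basics : Inclusion → Set DLConcept
  | .concl C D => C.basics ∪ D.basics
  | .rolel _ _ => ∅

/-- `N_C⁺(T)`: the basic concepts occurring in `T`, together with `⊤`, `⊥`. -/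
def TBox.basicConcepts (T : TBox) : Set DLConcept :=
  {DLConcept.top, DLConcept.bot} ∪ ⋃ α ∈ T, Inclusion.basics α

/-- A type over `T`. -/
def IsType (T : TBox) (τ : Set DLConcept) : Prop :=
  τ ⊆ TBox.basicConcepts T ∧ DLConcept.top ∈ τ ∧ DLConcept.bot ∉ τ

/-- `type(e, I)`. -/
def typeOf (T : TBox) (I : Interp) (e : Elem) : Set DLConcept :=
  {B | B ∈ TBox.basicConcepts T ∧ e ∈ I.cExt B}

/-- `τ` is realized in `I`. -/
def realizedIn (T : TBox) (I : Interp) (τ : Set DLConcept) : Prop :=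
  ∃ e ∈ I.dom, typeOf T I e = τ

def conjuncts : DLConcept → Set DLConcept
  | .conj C D => conjuncts C ∪ conjuncts D
  | C => {C}

def disjuncts : DLConcept → Set DLConcept
  | .disj C D => disjuncts C ∪ disjuncts D
  | C => {C}

/-- `τ` satisfies an (N1) inclusion. -/
def typeSatN1 (τ : Set DLConcept) : Inclusion → Prop
  | .concl C D => conjuncts C ⊆ τ → ∃ B ∈ disjuncts D, B ∈ τ
  | .rolel _ _ => True

/-- c-types. -/
def IsCType (T : TBox) (sig : Set ClosedPred) (τ : Set DLConcept) : Prop :=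
  (∃ a, DLConcept.nom a ∈ τ) ∨
  (∃ A, DLConcept.atom A ∈ τ ∧ ClosedPred.cp A ∈ sig) ∨
  (∃ A r A', exIncl A r A' ∈ T ∧ roleClosed T sig r ∧ DLConcept.atom A ∈ τ)

/-- The locally consistent types `LC(T, Σ, I_c)`. -/
def LC (T : TBox) (sig : Set ClosedPred) (Ic : Interp) : Set (Set DLConcept) :=
  {τ | IsType T τ ∧ (∀ α ∈ T, IsN1 α → typeSatN1 τ α) ∧
       (IsCType T sig τ → realizedIn T Ic τ)}

/-- Conditions (C1) and (C2): `τ'` is a legal response to the challenge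
`A ⊑ ∃r.A'` against the current type `τ`. -/
def LegalResponse (T : TBox) (A : ℕ) (r : DLRole) (A' : ℕ) (τ τ' : Set DLConcept) : Prop :=
  DLConcept.atom A' ∈ τ' ∧
  ∀ A₁ s A₂, Inclusion.concl (.atom A₁) (.all s (.atom A₂)) ∈ T →
    (subRole T r s → DLConcept.atom A₁ ∈ τ → DLConcept.atom A₂ ∈ τ') ∧
    (subRole T r.invert s → DLConcept.atom A₁ ∈ τ' → DLConcept.atom A₂ ∈ τ)

/-- A strategy for Bob, as a partial function. -/
abbrev Strategy := Set DLConcept → Inclusion → Option (Set DLConcept)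

/-- Well-formedness of a strategy: it is defined only on pairs of a non-c-type
`τ` and an existential inclusion of `T` triggered by `τ`, and returns a type
satisfying (C1) and (C2). -/
def IsStrategy (T : TBox) (sig : Set ClosedPred) (str : Strategy) : Prop :=
  ∀ τ α τ', str τ α = some τ' →
    IsType T τ ∧ ¬ IsCType T sig τ ∧ IsType T τ' ∧
    ∃ A r A', α = exIncl A r A' ∧ α ∈ T ∧ DLConcept.atom A ∈ τ ∧
      LegalResponse T A r A' τ τ'

/-- A finite run `a α₁ τ₁ α₂ τ₂ ⋯`. -/
structure GRun where
  start : Elem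
  steps : List (Inclusion × Set DLConcept)

/-- `tail(w)`. -/
def GRun.tail (T : TBox) (Ic : Interp) (w : GRun) : Set DLConcept :=
  match w.steps.getLast? with
  | some s => s.2
  | none => typeOf T Ic w.start

/-- `w` is a (finite) run of the game on the core `Ic`: it starts at a fringe
individual of `Ic`, its inclusions are existential inclusions of `T`, its
types are types over `T`, and only its last type may be a c-type. -/
def IsRunOn (T : TBox) (sig : Set ClosedPred) (Ic : Interp) (w : GRun) : Prop :=
  (∃ c α, w.start = Elem.fringe c α) ∧ w.start ∈ Ic.dom ∧
  (∀ s ∈ w.steps, s.1 ∈ T ∧ s.1.isExistential ∧ IsType T s.2) ∧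
  (∀ (i : ℕ) s, w.steps[i]? = some s → i + 1 < w.steps.length → ¬ IsCType T sig s.2)

def FollowsFrom (str : Strategy) : Set DLConcept → List (Inclusion × Set DLConcept) → Prop
  | _, [] => True
  | τ, (α, τ') :: rest => str τ α = some τ' ∧ FollowsFrom str τ' rest

/-- `w` follows the strategy `str` on `Ic`. -/
def RunFollows (T : TBox) (Ic : Interp) (str : Strategy) (w : GRun) : Prop :=
  FollowsFrom str (typeOf T Ic w.start) w.steps

/-- A non-losing strategy for Bob on `Ic`. -/
def NonLosing (T : TBox) (sig : Set ClosedPred) (Ic : Interp) (str : Strategy) : Prop :=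
  IsStrategy T sig str ∧
  ∀ w : GRun, IsRunOn T sig Ic w → RunFollows T Ic str w →
    w.tail T Ic ∈ LC T sig Ic ∧
    (¬ IsCType T sig (w.tail T Ic) →
      ∀ A r A', exIncl A r A' ∈ T → DLConcept.atom A ∈ w.tail T Ic →
        ∃ τ', str (w.tail T Ic) (exIncl A r A') = some τ')

/-! # The marking algorithm -/

/-- The types marked by the type elimination algorithm `Mark(T, Σ, I_c)`:
the least set containing all types violating some (N1) inclusion, all
c-types not realized in `I_c`, and closed under the rule (M_∃): a type gets
marked if some existential inclusion triggered by it has all its legal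
responses already marked. -/
inductive Marked (T : TBox) (sig : Set ClosedPred) (Ic : Interp) : Set DLConcept → Prop
  | n1 {τ : Set DLConcept} : IsType T τ →
      (∃ α ∈ T, IsN1 α ∧ ¬ typeSatN1 τ α) → Marked T sig Ic τ
  | closed {τ : Set DLConcept} : IsType T τ → IsCType T sig τ →
      ¬ realizedIn T Ic τ → Marked T sig Ic τ
  | exStep {τ : Set DLConcept} {A : ℕ} {r : DLRole} {A' : ℕ} :
      IsType T τ → exIncl A r A' ∈ T → DLConcept.atom A ∈ τ →
      (∀ τ', IsType T τ' → LegalResponse T A r A' τ τ' → Marked T sig Ic τ') →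
      Marked T sig Ic τ
/-! # Datalog with disjunction and negation, stable model semantics -/

/-- Predicate symbols: the concept names (unary), the role names (binary),
the built-in inequality predicate, and auxiliary predicates. -/
inductive DPred : Type
  | concept : ℕ → DPred
  | role : ℕ → DPred
  | neq : DPred
  | aux : ℕ → DPred
  deriving DecidableEq

inductive DTerm : Type
  | var : ℕ → DTerm
  | const : ℕ → DTerm
  deriving DecidableEq

structure DAtom where
  pred : DPred
  args : List DTerm
  deriving DecidableEq

/-- Ground atoms (over the constants). -/
structure GAtom where
  pred : DPred
  args : List ℕ
  deriving DecidableEq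

/-- A rule `h₁ ∨ ⋯ ∨ hₙ ← b₁, …, bₖ, not c₁, …, not cₘ`. -/
structure DRule where
  head : List DAtom
  posBody : List DAtom
  negBody : List DAtom
  deriving DecidableEq

abbrev DProgram := List DRule

def DTerm.constOf : DTerm → Set ℕ
  | .var _ => ∅
  | .const c => {c}

def DTerm.varOf : DTerm → Set ℕ
  | .var v => {v}
  | .const _ => ∅

def DAtom.consts (a : DAtom) : Set ℕ := ⋃ t ∈ a.args, DTerm.constOf t
def DAtom.vars (a : DAtom) : Set ℕ := ⋃ t ∈ a.args, DTerm.varOf t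
def DRule.atoms (ρ : DRule) : List DAtom := ρ.head ++ ρ.posBody ++ ρ.negBody
def DRule.consts (ρ : DRule) : Set ℕ := ⋃ a ∈ ρ.atoms, DAtom.consts a
def DRule.vars (ρ : DRule) : Set ℕ := ⋃ a ∈ ρ.atoms, DAtom.vars a
def progConsts (P : DProgram) : Set ℕ := ⋃ ρ ∈ P, DRule.consts ρ

/-- Safety: every variable of the rule occurs in a positive body atom. -/
def DRule.safe (ρ : DRule) : Prop := ∀ v ∈ ρ.vars, ∃ a ∈ ρ.posBody, v ∈ a.vars

def safeProgram (P : DProgram) : Prop := ∀ ρ ∈ P, ρ.safe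
def nonDisjunctive (P : DProgram) : Prop := ∀ ρ ∈ P, ρ.head.length ≤ 1
def positiveProgram (P : DProgram) : Prop := ∀ ρ ∈ P, ρ.negBody = []
/-- No occurrence of the built-in inequality predicate. -/
def neqFree (P : DProgram) : Prop := ∀ ρ ∈ P, ∀ a ∈ ρ.atoms, a.pred ≠ DPred.neq

/-- Ground rules. -/
structure GRRule where
  head : List GAtom
  posBody : List GAtom
  negBody : List GAtom

def DTerm.subst (σ : ℕ → ℕ) : DTerm → ℕ
  | .var v => σ v
  | .const c => c

def DAtom.inst (σ : ℕ → ℕ) (a : DAtom) : GAtom := ⟨a.pred, a.args.map (DTerm.subst σ)⟩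

def DRule.inst (σ : ℕ → ℕ) (ρ : DRule) : GRRule :=
  ⟨ρ.head.map (DAtom.inst σ), ρ.posBody.map (DAtom.inst σ), ρ.negBody.map (DAtom.inst σ)⟩

/-- The grounding of a program: all instances of its rules over the
constants occurring in the program. -/
def grounding (P : DProgram) : Set GRRule :=
  {g | ∃ ρ ∈ P, ∃ σ : ℕ → ℕ, (∀ v ∈ DRule.vars ρ, σ v ∈ progConsts P) ∧ g = DRule.inst σ ρ}

/-- A constant occurring in a non-inequality atom of `I`. -/
def activeConst (I : Finset GAtom) (c : ℕ) : Prop :=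
  ∃ g ∈ I, g.pred ≠ DPred.neq ∧ c ∈ g.args

/-- The built-in semantics of the inequality predicate: `a ≠ b` holds in `I`
iff `a` and `b` are distinct constants both occurring in non-inequality atoms
of `I`. -/
def respectsNeq (I : Finset GAtom) : Prop :=
  ∀ args : List ℕ, (⟨DPred.neq, args⟩ : GAtom) ∈ I ↔
    ∃ a b : ℕ, args = [a, b] ∧ a ≠ b ∧ activeConst I a ∧ activeConst I b

/-- `I` is a (Herbrand) model of a set of positive ground rules. -/
def isHModel (I : Finset GAtom) (G : Set GRRule) : Prop :=
  respectsNeq I ∧ ∀ g ∈ G, (∀ b ∈ g.posBody, b ∈ I) → ∃ h ∈ g.head, h ∈ I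

/-- The GL-reduct of a set of ground rules with respect to `I`. -/
def glReduct (G : Set GRRule) (I : Finset GAtom) : Set GRRule :=
  {g' | ∃ g ∈ G, (∀ n ∈ g.negBody, n ∉ I) ∧ g' = ⟨g.head, g.posBody, []⟩}

/-- `I` is a stable model of `P`: a minimal model of the GL-reduct of the
grounding of `P` with respect to `I`. -/
def isStable (P : DProgram) (I : Finset GAtom) : Prop :=
  isHModel I (glReduct (grounding P) I) ∧
  ∀ J : Finset GAtom, isHModel J (glReduct (grounding P) I) → J ⊆ I → J = I

/-- ABox assertions as facts. -/
def assertFact : Assertion → DRule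
  | .ca A a => ⟨[⟨DPred.concept A, [DTerm.const a]⟩], [], []⟩
  | .ra p a b => ⟨[⟨DPred.role p, [DTerm.const a, DTerm.const b]⟩], [], []⟩

def aboxFacts (Ab : ABox) : DProgram := Ab.map assertFact

/-- Ground atoms as facts. -/
def gfact (g : GAtom) : DRule := ⟨[⟨g.pred, g.args.map DTerm.const⟩], [], []⟩

def factProg (F : List GAtom) : DProgram := F.map gfact

def GAtom.rename (ρ : ℕ → ℕ) (g : GAtom) : GAtom := ⟨g.pred, g.args.map ρ⟩

def gconsts (F : List GAtom) : Set ℕ := ⋃ g ∈ F, {c | c ∈ g.args}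

/-- `t` is a certain answer to the query `(P, q̂)` over the database `D`:
`q̂(t)` belongs to every stable model of `P ∪ D`. -/
def certD (P : DProgram) (qp : DPred) (D : DProgram) (t : List ℕ) : Prop :=
  ∀ I : Finset GAtom, isStable (P ++ D) I → (⟨qp, t⟩ : GAtom) ∈ I

section Stmt15Aux

lemma stmt15_mem_progConsts {Q : DProgram} {c : ℕ} :
    c ∈ progConsts Q ↔ ∃ r ∈ Q, c ∈ DRule.consts r := by
  simp [progConsts]

lemma stmt15_mem_progConsts_append {P Q : DProgram} {c : ℕ} :
    c ∈ progConsts (P ++ Q) ↔ c ∈ progConsts P ∨ c ∈ progConsts Q := by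
  simp [stmt15_mem_progConsts, List.mem_append, or_and_right, exists_or]

lemma stmt15_mem_gconsts {F : List GAtom} {c : ℕ} :
    c ∈ gconsts F ↔ ∃ g ∈ F, c ∈ g.args := by
  simp [gconsts]

lemma stmt15_consts_gfact (g : GAtom) : DRule.consts (gfact g) = {c | c ∈ g.args} := by
  ext c
  simp [DRule.consts, gfact, DRule.atoms, DAtom.consts, DTerm.constOf]

lemma stmt15_mem_progConsts_factProg {F : List GAtom} {c : ℕ} :
    c ∈ progConsts (factProg F) ↔ c ∈ gconsts F := by
  simp only [stmt15_mem_progConsts, stmt15_mem_gconsts, factProg, List.mem_map]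
  constructor
  · rintro ⟨r, ⟨g, hg, rfl⟩, hc⟩
    rw [stmt15_consts_gfact] at hc
    exact ⟨g, hg, hc⟩
  · rintro ⟨g, hg, hc⟩
    exact ⟨gfact g, ⟨g, hg, rfl⟩, by rw [stmt15_consts_gfact]; exact hc⟩

lemma stmt15_mem_rule_consts {r : DRule} {b : DAtom} {c : ℕ}
    (hb : b ∈ r.atoms) (hc : c ∈ DAtom.consts b) : c ∈ DRule.consts r := by
  simp only [DRule.consts, Set.mem_iUnion]
  exact ⟨b, hb, hc⟩

lemma stmt15_gfact_mem_grounding {Q : DProgram} {g : GAtom} (h : gfact g ∈ Q) :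
    (⟨[g], [], []⟩ : GRRule) ∈ grounding Q := by
  refine ⟨gfact g, h, id, ?_, ?_⟩
  · intro v hv
    exfalso
    simp [DRule.vars, gfact, DRule.atoms, DAtom.vars, DTerm.varOf] at hv
  · have h2 : List.map (DTerm.subst id ∘ DTerm.const) g.args = g.args := by
      rw [show (DTerm.subst id ∘ DTerm.const) = id from rfl, List.map_id]
    simp [DRule.inst, gfact, DAtom.inst, List.map_map, h2]

lemma stmt15_rename_inst (pb σ' : ℕ → ℕ) (b : DAtom)
    (hc : ∀ c ∈ DAtom.consts b, pb c = c) :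
    GAtom.rename pb (DAtom.inst σ' b) = DAtom.inst (fun v => pb (σ' v)) b := by
  unfold GAtom.rename DAtom.inst
  simp only [List.map_map]
  congr 1
  apply List.map_congr_left
  intro t ht
  cases t with
  | var v => rfl
  | const c =>
    refine hc c ?_
    simp only [DAtom.consts, Set.mem_iUnion]
    exact ⟨DTerm.const c, ht, by simp [DTerm.constOf]⟩

end Stmt15Aux

/-- Let `P` be a positive (possibly disjunctive) Datalog
program without occurrences of the built-in inequality predicate `≠`, and let
`F` be a set of ground facts. If `P ∪ F` has a model, then `P ∪ F'` has a
model, where `F'` is obtained from `F` by injectively renaming its constants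
to fresh constants not occurring in `P ∪ F`. -/
theorem stmt15_rename_constants (P : DProgram) (hsafe : safeProgram P)
    (hpos : positiveProgram P) (hneq : neqFree P)
    (F : List GAtom) (ρ : ℕ → ℕ)
    (hinj : ∀ a ∈ gconsts F, ∀ b ∈ gconsts F, ρ a = ρ b → a = b)
    (hfresh : ∀ a ∈ gconsts F, ρ a ∉ progConsts (P ++ factProg F))
    (hmod : ∃ I : Finset GAtom, isHModel I (grounding (P ++ factProg F))) :
    ∃ I' : Finset GAtom,
      isHModel I' (grounding (P ++ factProg (F.map (GAtom.rename ρ)))) := by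
  classical
  obtain ⟨I, hIneq, hIrule⟩ := hmod
  -- the pullback map: collapses each fresh constant `ρ a` back to `a`
  set pb : ℕ → ℕ := fun c => if h : ∃ a, a ∈ gconsts F ∧ ρ a = c then h.choose else c with hpb
  have pb_old : ∀ c ∈ progConsts (P ++ factProg F), pb c = c := by
    intro c hc
    have hno : ¬ ∃ a, a ∈ gconsts F ∧ ρ a = c := by
      rintro ⟨a, ha, rfl⟩
      exact hfresh a ha hc
    show (if h : ∃ a, a ∈ gconsts F ∧ ρ a = c then h.choose else c) = c
    exact dif_neg hno
  have pb_rho : ∀ a ∈ gconsts F, pb (ρ a) = a := by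
    intro a ha
    have hex : ∃ a', a' ∈ gconsts F ∧ ρ a' = ρ a := ⟨a, ha, rfl⟩
    have h1 : pb (ρ a) = hex.choose := by
      show (if h : ∃ a', a' ∈ gconsts F ∧ ρ a' = ρ a then h.choose else ρ a) = hex.choose
      exact dif_pos hex
    rw [h1]
    exact hinj _ hex.choose_spec.1 _ ha hex.choose_spec.2
  -- finiteness of fibers of pb
  have fiber_sub : ∀ b : ℕ, {c : ℕ | pb c = b} ⊆ {b, ρ b} := by
    intro b c hc
    replace hc : (if h : ∃ a, a ∈ gconsts F ∧ ρ a = c then h.choose else c) = b := hc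
    by_cases h : ∃ a, a ∈ gconsts F ∧ ρ a = c
    · rw [dif_pos h] at hc
      have h2 := h.choose_spec.2
      rw [hc] at h2
      right
      exact h2.symm
    · rw [dif_neg h] at hc
      left
      exact hc
  have fiber_fin : ∀ b : ℕ, {c : ℕ | pb c = b}.Finite :=
    fun b => ((Set.finite_singleton (ρ b)).insert b).subset (fiber_sub b)
  have list_fin : ∀ m : List ℕ, {l : List ℕ | l.map pb = m}.Finite := by
    intro m
    induction m with
    | nil =>
      refine Set.Finite.subset (Set.finite_singleton ([] : List ℕ)) ?_
      intro l hl
      simp only [Set.mem_setOf_eq, List.map_eq_nil_iff] at hl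
      simp [hl]
    | cons a m ih =>
      refine Set.Finite.subset (((fiber_fin a).prod ih).image fun p => p.1 :: p.2) ?_
      intro l hl
      simp only [Set.mem_setOf_eq] at hl
      cases l with
      | nil => simp at hl
      | cons c l' =>
        simp only [List.map_cons, List.cons.injEq] at hl
        exact ⟨(c, l'), ⟨hl.1, hl.2⟩, rfl⟩
  -- the preimage of the non-neq part of I under renaming by pb
  have hSB : {g' : GAtom | g'.pred ≠ DPred.neq ∧ GAtom.rename pb g' ∈ I}.Finite := by
    refine Set.Finite.subset
      (Set.Finite.biUnion I.finite_toSet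
        (fun w _ => (list_fin w.args).image fun l => GAtom.mk w.pred l)) ?_
    rintro g' ⟨-, hg'⟩
    exact Set.mem_biUnion hg' ⟨g'.args, rfl, rfl⟩
  set B : Finset GAtom := hSB.toFinset with hBdef
  have mem_B : ∀ g : GAtom, g ∈ B ↔ (g.pred ≠ DPred.neq ∧ GAtom.rename pb g ∈ I) := by
    intro g
    rw [hBdef, Set.Finite.mem_toFinset]
    rfl
  -- a fresh auxiliary predicate index
  obtain ⟨k, hk⟩ : ∃ k : ℕ, ∀ r ∈ P, ∀ b ∈ r.posBody, b.pred ≠ DPred.aux k := by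
    set ks : List ℕ := (P.flatMap fun r => r.posBody).filterMap
        (fun b => match b.pred with | DPred.aux n => some n | _ => none) with hks
    refine ⟨ks.toFinset.sup id + 1, ?_⟩
    intro r hr b hb hpred
    have hmem : ks.toFinset.sup id + 1 ∈ ks := by
      rw [hks]
      refine List.mem_filterMap.2 ⟨b, List.mem_flatMap.2 ⟨r, hr, hb⟩, ?_⟩
      rw [hpred]
    have := Finset.le_sup (f := id) (List.mem_toFinset.2 hmem)
    simp only [id] at this
    omega
  set FC : Finset ℕ := (F.flatMap fun g => g.args).toFinset with hFCdef
  set Extra : Finset GAtom := FC.image fun a => (⟨DPred.aux k, [ρ a]⟩ : GAtom) with hExdef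
  set A : Finset ℕ := (B ∪ Extra).biUnion (fun g => g.args.toFinset) with hAdef
  set N : Finset GAtom :=
    ((A ×ˢ A).filter fun p => p.1 ≠ p.2).image
      (fun p => (⟨DPred.neq, [p.1, p.2]⟩ : GAtom)) with hNdef
  have extra_pred : ∀ g ∈ Extra, g.pred = DPred.aux k := by
    intro g hg
    rw [hExdef] at hg
    obtain ⟨a, -, rfl⟩ := Finset.mem_image.1 hg
    rfl
  have N_pred : ∀ g ∈ N, g.pred = DPred.neq := by
    intro g hg
    rw [hNdef] at hg
    obtain ⟨p, -, rfl⟩ := Finset.mem_image.1 hg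
    rfl
  have active_to_A : ∀ c : ℕ, activeConst (B ∪ Extra ∪ N) c → c ∈ A := by
    rintro c ⟨g, hg, hgneq, hc⟩
    rcases Finset.mem_union.1 hg with hg' | hg'
    · rw [hAdef]
      exact Finset.mem_biUnion.2 ⟨g, hg', List.mem_toFinset.2 hc⟩
    · exact absurd (N_pred g hg') hgneq
  have A_to_active : ∀ c ∈ A, activeConst (B ∪ Extra ∪ N) c := by
    intro c hc
    rw [hAdef] at hc
    obtain ⟨g, hg, hc⟩ := Finset.mem_biUnion.1 hc
    refine ⟨g, Finset.mem_union_left _ hg, ?_, List.mem_toFinset.1 hc⟩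
    rcases Finset.mem_union.1 hg with hg' | hg'
    · exact ((mem_B g).1 hg').1
    · rw [extra_pred g hg']
      simp
  refine ⟨B ∪ Extra ∪ N, ?_, ?_⟩
  · -- respectsNeq
    intro args
    constructor
    · intro h
      rcases Finset.mem_union.1 h with h' | h'
      · rcases Finset.mem_union.1 h' with h'' | h''
        · exact absurd rfl ((mem_B _).1 h'').1
        · exact absurd (extra_pred _ h'') (by simp)
      · rw [hNdef] at h'
        obtain ⟨p, hp, heq⟩ := Finset.mem_image.1 h'
        obtain ⟨hpA, hne⟩ := Finset.mem_filter.1 hp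
        obtain ⟨h1, h2⟩ := Finset.mem_product.1 hpA
        have hargs : args = [p.1, p.2] := (congrArg GAtom.args heq).symm
        exact ⟨p.1, p.2, hargs, hne, A_to_active _ h1, A_to_active _ h2⟩
    · rintro ⟨a, b, rfl, hab, ha, hb⟩
      refine Finset.mem_union_right _ ?_
      rw [hNdef]
      exact Finset.mem_image.2 ⟨(a, b),
        Finset.mem_filter.2 ⟨Finset.mem_product.2 ⟨active_to_A a ha, active_to_A b hb⟩, hab⟩, rfl⟩
  · -- rule satisfaction
    rintro g' ⟨r, hr, σ', hσ', rfl⟩ hbody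
    rcases List.mem_append.1 hr with hrP | hrF
    · -- rules of P
      have hconsts : ∀ b ∈ r.atoms, ∀ c ∈ DAtom.consts b, pb c = c := by
        intro b hb c hc
        refine pb_old c (stmt15_mem_progConsts_append.2 (Or.inl ?_))
        exact stmt15_mem_progConsts.2 ⟨r, hrP, stmt15_mem_rule_consts hb hc⟩
      have hcomm : ∀ b ∈ r.atoms,
          GAtom.rename pb (DAtom.inst σ' b) = DAtom.inst (fun v => pb (σ' v)) b :=
        fun b hb => stmt15_rename_inst pb σ' b (hconsts b hb)
      have hσ : ∀ v ∈ DRule.vars r, pb (σ' v) ∈ progConsts (P ++ factProg F) := by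
        intro v hv
        have h1 := hσ' v hv
        rcases stmt15_mem_progConsts_append.1 h1 with h2 | h2
        · have h3 : σ' v ∈ progConsts (P ++ factProg F) :=
            stmt15_mem_progConsts_append.2 (Or.inl h2)
          rw [pb_old _ h3]
          exact h3
        · have h3 := stmt15_mem_gconsts.1 (stmt15_mem_progConsts_factProg.1 h2)
          obtain ⟨g2, hg2, harg⟩ := h3
          obtain ⟨g, hg, rfl⟩ := List.mem_map.1 hg2
          obtain ⟨a, ha, heq⟩ := List.mem_map.1 harg
          have haF : a ∈ gconsts F := stmt15_mem_gconsts.2 ⟨g, hg, ha⟩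
          rw [← heq, pb_rho a haF]
          exact stmt15_mem_progConsts_append.2
            (Or.inr (stmt15_mem_progConsts_factProg.2 haF))
      have hginst : DRule.inst (fun v => pb (σ' v)) r ∈ grounding (P ++ factProg F) :=
        ⟨r, List.mem_append.2 (Or.inl hrP), fun v => pb (σ' v), hσ, rfl⟩
      have hbodyI : ∀ bg ∈ (DRule.inst (fun v => pb (σ' v)) r).posBody, bg ∈ I := by
        intro bg hbg
        obtain ⟨b, hb, rfl⟩ := List.mem_map.1 hbg
        have hbatom : b ∈ r.atoms := by
          simp only [DRule.atoms, List.mem_append]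
          tauto
        have h1 : DAtom.inst σ' b ∈ B ∪ Extra ∪ N :=
          hbody _ (List.mem_map.2 ⟨b, hb, rfl⟩)
        have hbneq : b.pred ≠ DPred.neq := hneq r hrP b hbatom
        have hB : DAtom.inst σ' b ∈ B := by
          rcases Finset.mem_union.1 h1 with h1' | h1'
          · rcases Finset.mem_union.1 h1' with h1'' | h1''
            · exact h1''
            · exact absurd (extra_pred _ h1'') (hk r hrP b hb)
          · exact absurd (N_pred _ h1') hbneq
        have h2 := ((mem_B _).1 hB).2
        rwa [hcomm b hbatom] at h2
      obtain ⟨h, hh, hhI⟩ := hIrule _ hginst hbodyI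
      obtain ⟨ha, hha, rfl⟩ := List.mem_map.1 hh
      have hhatom : ha ∈ r.atoms := by
        simp only [DRule.atoms, List.mem_append]
        tauto
      refine ⟨DAtom.inst σ' ha, List.mem_map.2 ⟨ha, hha, rfl⟩, ?_⟩
      refine Finset.mem_union_left _ (Finset.mem_union_left _ ?_)
      rw [mem_B]
      refine ⟨hneq r hrP ha hhatom, ?_⟩
      rw [hcomm ha hhatom]
      exact hhI
    · -- facts of F'
      obtain ⟨g2, hg2, rfl⟩ := List.mem_map.1 hrF
      obtain ⟨g, hgF, rfl⟩ := List.mem_map.1 hg2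
      have hhead : DRule.inst σ' (gfact (GAtom.rename ρ g)) = ⟨[GAtom.rename ρ g], [], []⟩ := by
        have h2 : List.map (DTerm.subst σ' ∘ DTerm.const) (GAtom.rename ρ g).args
            = (GAtom.rename ρ g).args := by
          rw [show (DTerm.subst σ' ∘ DTerm.const) = id from rfl, List.map_id]
        simp [DRule.inst, gfact, DAtom.inst, List.map_map, h2]
      rw [hhead]
      have hgI : g ∈ I := by
        have hmem : gfact g ∈ P ++ factProg F :=
          List.mem_append.2 (Or.inr (List.mem_map.2 ⟨g, hgF, rfl⟩))
        obtain ⟨h, hh, hhI⟩ := hIrule _ (stmt15_gfact_mem_grounding hmem) (by intro b hb; simp at hb)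
        rw [List.mem_singleton] at hh
        rwa [hh] at hhI
      refine ⟨GAtom.rename ρ g, List.mem_singleton_self _, ?_⟩
      by_cases hgp : g.pred = DPred.neq
      · -- a renamed inequality fact
        have hgeq : (⟨DPred.neq, g.args⟩ : GAtom) = g := by rw [← hgp]
        obtain ⟨a, b, hargs, hab, -, -⟩ := (hIneq g.args).1 (by rw [hgeq]; exact hgI)
        have haF : a ∈ gconsts F := stmt15_mem_gconsts.2 ⟨g, hgF, by rw [hargs]; simp⟩
        have hbF : b ∈ gconsts F := stmt15_mem_gconsts.2 ⟨g, hgF, by rw [hargs]; simp⟩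
        have hrab : ρ a ≠ ρ b := fun h => hab (hinj a haF b hbF h)
        have hAmem : ∀ c ∈ gconsts F, ρ c ∈ A := by
          intro c hc
          rw [hAdef]
          refine Finset.mem_biUnion.2 ⟨⟨DPred.aux k, [ρ c]⟩, ?_, by simp⟩
          refine Finset.mem_union_right _ ?_
          rw [hExdef]
          refine Finset.mem_image.2 ⟨c, ?_, rfl⟩
          rw [hFCdef, List.mem_toFinset, List.mem_flatMap]
          exact stmt15_mem_gconsts.1 hc
        have hform : GAtom.rename ρ g = ⟨DPred.neq, [ρ a, ρ b]⟩ := by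
          unfold GAtom.rename
          rw [hargs, hgp]
          rfl
        rw [hform]
        refine Finset.mem_union_right _ ?_
        rw [hNdef]
        exact Finset.mem_image.2 ⟨(ρ a, ρ b),
          Finset.mem_filter.2 ⟨Finset.mem_product.2 ⟨hAmem a haF, hAmem b hbF⟩, hrab⟩, rfl⟩
      · -- an ordinary renamed fact
        refine Finset.mem_union_left _ (Finset.mem_union_left _ ?_)
        rw [mem_B]
        refine ⟨hgp, ?_⟩
        have hback : GAtom.rename pb (GAtom.rename ρ g) = g := by
          unfold GAtom.rename
          simp only [List.map_map]
          have h2 : g.args.map (pb ∘ ρ) = g.args.map id := by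
            apply List.map_congr_left
            intro c hc
            exact pb_rho c (stmt15_mem_gconsts.2 ⟨g, hgF, hc⟩)
          rw [h2, List.map_id]
        rw [hback]
        exact hgI
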